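/- For h ≥ 2, there exist infinitely many sets A ⊆ ℤ such that r_{A,h}(n) = 1 for every integer n, i.e., every integer has exactly one representation as a nondecreasing sum of h elements of A (A is a 'unique representation basis' of order h for ℤ). -/

import Mathlib

open Multiset

/-- The representation function of order `h` of `A ⊆ ℤ`. -/
noncomputable def repFn (A : Set ℤ) (h : ℕ) (n : ℤ) : ℕ∞ :=
  {g : Fin h → ℤ | Monotone g ∧ (∀ i, g i ∈ A) ∧ ∑ i, g i = n}.encard

/-- `s` is a representation of `n` as a multiset of `h` elements of `A`. -/
def IsRep (A : Set ℤ) (h : ℕ) (n : ℤ) (s : Multiset ℤ) : Prop :=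
  Multiset.card s = h ∧ (∀ a ∈ s, a ∈ A) ∧ s.sum = n

/-- Finite set has all multiset sums of each size `≤ h` distinct. -/
def GoodF (h : ℕ) (F : Finset ℤ) : Prop :=
  ∀ s t : Multiset ℤ, Multiset.card s ≤ h → Multiset.card t = Multiset.card s →
    (∀ a ∈ s, a ∈ F) → (∀ a ∈ t, a ∈ F) → s.sum = t.sum → s = t

lemma bridge (A : Set ℤ) (h : ℕ) (n : ℤ)
    (H : ∃! s : Multiset ℤ, IsRep A h n s) : repFn A h n = 1 := by
  obtain ⟨s, hs, huniq⟩ := H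
  -- every tuple in the set has `ofFn` equal to sort of s
  have key : ∀ g : Fin h → ℤ, Monotone g → (∀ i, g i ∈ A) → ∑ i, g i = n →
      (List.ofFn g : Multiset ℤ) = s := by
    intro g hg hmem hsum
    refine huniq _ ?_
    refine ⟨by simp, ?_, by simp [List.sum_ofFn, hsum]⟩
    intro a ha
    rw [Multiset.mem_coe, List.mem_ofFn] at ha
    obtain ⟨i, rfl⟩ := ha
    exact hmem i
  have huniq2 : ∀ g g' : Fin h → ℤ, Monotone g → (∀ i, g i ∈ A) → ∑ i, g i = n →
      Monotone g' → (∀ i, g' i ∈ A) → ∑ i, g' i = n → g = g' := by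
    intro g g' h1 h2 h3 h1' h2' h3'
    have e1 := key g h1 h2 h3
    have e2 := key g' h1' h2' h3'
    have : (List.ofFn g : Multiset ℤ) = (List.ofFn g' : Multiset ℤ) := e1.trans e2.symm
    rw [Multiset.coe_eq_coe] at this
    have := List.Perm.eq_of_pairwise' (r := (· ≤ ·)) (List.pairwise_ofFn.2 fun i j hij => h1 hij.le) (List.pairwise_ofFn.2 fun i j hij => h1' hij.le) this
    exact List.ofFn_injective this
  -- existence
  obtain ⟨hcard, hmem, hsum⟩ := hs
  set l := s.sort (· ≤ ·) with hl
  have hlen : l.length = h := by rw [hl, Multiset.length_sort, hcard]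
  set g : Fin h → ℤ := fun i => l.get (Fin.cast hlen.symm i) with hgdef
  have hofn : List.ofFn g = l := by
    rw [hgdef, ← List.ofFn_congr hlen l.get, List.ofFn_get]
  have hmono : Monotone g := by
    intro i j hij
    rcases eq_or_lt_of_le hij with rfl | hlt
    · exact le_rfl
    · exact (Multiset.pairwise_sort s (· ≤ ·)).rel_get_of_lt (by simpa using hlt)
  have hgmem : ∀ i, g i ∈ A := by
    intro i
    apply hmem
    have : g i ∈ l := l.get_mem _
    rwa [← Multiset.mem_sort (· ≤ ·)]
  have hgsum : ∑ i, g i = n := by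
    have h1 : (List.ofFn g).sum = l.sum := by rw [hofn]
    rw [List.sum_ofFn] at h1
    have h2 : l.sum = s.sum := by
      conv_rhs => rw [← Multiset.sort_eq s (· ≤ ·)]
      rfl
    rw [h1, h2, hsum]
  rw [repFn, Set.encard_eq_one]
  exact ⟨g, Set.eq_singleton_iff_unique_mem.2 ⟨⟨hmono, hgmem, hgsum⟩,
    fun g' ⟨h1, h2, h3⟩ => huniq2 g' g h1 h2 h3 hmono hgmem hgsum⟩⟩

/-- decomposition of a multiset over `insert x (insert y F)` -/
lemma decomp (F : Finset ℤ) (x y : ℤ) (hx : x ∉ F) (hy : y ∉ F) (hxy : x ≠ y)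
    (s : Multiset ℤ) (hs : ∀ a ∈ s, a ∈ insert x (insert y F)) :
    ∃ (j k : ℕ) (s₀ : Multiset ℤ), s = replicate j x + replicate k y + s₀ ∧
      ∀ a ∈ s₀, a ∈ F := by
  induction s using Multiset.induction_on with
  | empty => exact ⟨0, 0, 0, by simp, by simp⟩
  | cons a s ih =>
    obtain ⟨j, k, s₀, hdec, hmem⟩ := ih (fun b hb => hs b (mem_cons_of_mem hb))
    have ha := hs a (mem_cons_self a s)
    simp only [Finset.mem_insert] at ha
    rcases ha with rfl | rfl | ha
    · refine ⟨j + 1, k, s₀, ?_, hmem⟩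
      rw [hdec, replicate_succ]
      simp only [← Multiset.singleton_add]
      abel
    · refine ⟨j, k + 1, s₀, ?_, hmem⟩
      rw [hdec, replicate_succ]
      simp only [← Multiset.singleton_add]
      abel
    · refine ⟨j, k, a ::ₘ s₀, ?_, ?_⟩
      · rw [hdec]
        simp only [← Multiset.singleton_add]
        abel
      · intro b hb
        rcases mem_cons.1 hb with rfl | hb
        · exact ha
        · exact hmem b hb

lemma abs_sum_le (s : Multiset ℤ) (M : ℤ) (hM : ∀ a ∈ s, |a| ≤ M) :
    |s.sum| ≤ (Multiset.card s : ℤ) * M := by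
  induction s using Multiset.induction_on with
  | empty => simp
  | cons a s ih =>
    have h1 := hM a (mem_cons_self a s)
    have h2 := ih (fun b hb => hM b (mem_cons_of_mem hb))
    have := abs_add_le a s.sum
    simp only [sum_cons, card_cons]
    push_cast
    calc |a + s.sum| ≤ |a| + |s.sum| := abs_add_le _ _
      _ ≤ M + (Multiset.card s : ℤ) * M := add_le_add h1 h2
      _ = ((Multiset.card s : ℤ) + 1) * M := by ring

lemma nocross (h : ℕ) (hh : 2 ≤ h) (F : Finset ℤ) (n : ℤ)
    (hn : ¬ ∃ s, IsRep (↑F) h n s)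
    (j k j' k' : ℕ) (s₀ t₀ : Multiset ℤ)
    (hs0 : ∀ a ∈ s₀, a ∈ F)
    (hcs : j + k + Multiset.card s₀ ≤ h)
    (hct : j' + k' + Multiset.card t₀ = j + k + Multiset.card s₀)
    (hc : (j : ℤ) - ((h : ℤ) - 1) * k = (j' : ℤ) - ((h : ℤ) - 1) * k')
    (hrest : (k : ℤ) * n + s₀.sum = (k' : ℤ) * n + t₀.sum)
    (hkk : k < k') : False := by
  set d : ℕ := k' - k with hd
  have hd1 : 1 ≤ d := by omega
  have hkd : (k' : ℤ) = k + d := by push_cast; omega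
  have hjj : (j' : ℤ) = j + ((h : ℤ) - 1) * d := by rw [hkd] at hc; linarith
  have hj'n : j' = j + (h - 1) * d := by
    have : ((h:ℤ) - 1) = ((h - 1 : ℕ) : ℤ) := by push_cast [Nat.cast_sub (by omega : 1 ≤ h)]; ring
    rw [this] at hjj; exact_mod_cast hjj
  have hdle : d ≤ h * d := Nat.le_mul_of_pos_left d (by omega)
  have hhd : h ≤ h * d := Nat.le_mul_of_pos_right h (by omega)
  have hsplit : (h - 1) * d + d = h * d := by
    have h1 : (h - 1) * d = h * d - 1 * d := by rw [Nat.sub_mul]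
    omega
  have hgle : h * d ≤ h := by omega
  have hd1' : d = 1 := by
    rcases (by omega : d = 1 ∨ 2 ≤ d) with h1 | h2
    · exact h1
    · have := Nat.mul_le_mul_left h h2
      omega
  have hgone : h * d = h := by rw [hd1', mul_one]
  have hj0 : j = 0 := by omega
  have hk0 : k = 0 := by omega
  have hct0 : Multiset.card t₀ = 0 := by omega
  have hcs0 : Multiset.card s₀ = h := by omega
  have ht0 : t₀ = 0 := card_eq_zero.1 hct0
  have hk'1 : k' = 1 := by omega
  apply hn
  refine ⟨s₀, hcs0, fun a ha => hs0 a ha, ?_⟩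
  rw [hk0, hk'1, ht0] at hrest
  simpa using hrest

set_option maxHeartbeats 2000000 in
lemma step (h : ℕ) (hh : 2 ≤ h) (F : Finset ℤ) (n : ℤ) (hF : GoodF h F)
    (hn : ¬ ∃ s, IsRep (↑F) h n s) :
    ∃ F' : Finset ℤ, F ⊆ F' ∧ GoodF h F' ∧ ∃ s, IsRep (↑F') h n s := by
  classical
  set M : ℤ := ((F.sup Int.natAbs : ℕ) : ℤ) with hMdef
  have hM0 : 0 ≤ M := by positivity
  have hMb : ∀ a ∈ F, |a| ≤ M := by
    intro a ha
    have := Finset.le_sup (f := Int.natAbs) ha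
    rw [hMdef]
    rw [Int.abs_eq_natAbs]
    exact_mod_cast this
  set K : ℤ := M + |n| + 1 with hKdef
  have hK1 : 1 ≤ K := by have := abs_nonneg n; omega
  set x : ℤ := (2 * h + 2) * K with hxdef
  have hhz : (2:ℤ) ≤ (h:ℤ) := by exact_mod_cast hh
  have hxK : 6 * K ≤ x := by
    rw [hxdef]; nlinarith
  have hx0 : 0 < x := by linarith
  set y : ℤ := n - ((h:ℤ) - 1) * x with hydef
  have hyneg : y < -M := by
    have h1 : x ≤ ((h:ℤ) - 1) * x := by nlinarith
    have h2 : n ≤ |n| := le_abs_self n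
    rw [hydef]
    have : |n| < K := by omega
    linarith
  have hxM : M < x := by have := abs_nonneg n; linarith
  have hxF : x ∉ F := fun hmem => absurd (hMb x hmem) (by rw [abs_of_pos hx0]; omega)
  have hyF : y ∉ F := fun hmem => by
    have := hMb y hmem
    have := neg_abs_le y
    linarith
  have hxy : x ≠ y := by intro e; rw [← e] at hyneg; linarith
  refine ⟨insert x (insert y F), by intro a ha; simp [ha], ?_, ?_⟩
  · -- GoodF
    intro s t hsc htc hsmem htmem hsum
    obtain ⟨j, k, s₀, hsdec, hs0⟩ := decomp F x y hxF hyF hxy s hsmem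
    obtain ⟨j', k', t₀, htdec, ht0⟩ := decomp F x y hxF hyF hxy t htmem
    have hscard : j + k + Multiset.card s₀ = Multiset.card s := by
      rw [hsdec]; simp
    have htcard : j' + k' + Multiset.card t₀ = Multiset.card t := by
      rw [htdec]; simp
    have hssum : s.sum = ((j:ℤ) - ((h:ℤ)-1) * k) * x + (k:ℤ) * n + s₀.sum := by
      rw [hsdec]; simp [sum_replicate, hydef]; push_cast; ring
    have htsum : t.sum = ((j':ℤ) - ((h:ℤ)-1) * k') * x + (k':ℤ) * n + t₀.sum := by
      rw [htdec]; simp [sum_replicate, hydef]; push_cast; ring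
    -- bounds
    have hs0b : |s₀.sum| ≤ (h:ℤ) * M := by
      have h1 := abs_sum_le s₀ M (fun a ha => hMb a (hs0 a ha))
      have h2 : (Multiset.card s₀ : ℤ) ≤ (h:ℤ) := by exact_mod_cast le_trans (by omega) hsc
      nlinarith
    have ht0b : |t₀.sum| ≤ (h:ℤ) * M := by
      have h1 := abs_sum_le t₀ M (fun a ha => hMb a (ht0 a ha))
      have h2 : (Multiset.card t₀ : ℤ) ≤ (h:ℤ) := by
        have : Multiset.card t₀ ≤ h := by omega
        exact_mod_cast this
      nlinarith
    have hkh : (k:ℤ) ≤ h := by exact_mod_cast le_trans (by omega) hsc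
    have hk'h : (k':ℤ) ≤ h := by
      have : k' ≤ h := by omega
      exact_mod_cast this
    -- same coefficient
    have hcc : (j:ℤ) - ((h:ℤ)-1) * k = (j':ℤ) - ((h:ℤ)-1) * k' := by
      by_contra hne
      have h1 : (1:ℤ) ≤ |((j:ℤ) - ((h:ℤ)-1) * k) - ((j':ℤ) - ((h:ℤ)-1) * k')| :=
        Int.one_le_abs (sub_ne_zero.2 hne)
      have h2 : (((j:ℤ) - ((h:ℤ)-1) * k) - ((j':ℤ) - ((h:ℤ)-1) * k')) * x
          = ((k':ℤ) - k) * n + (t₀.sum - s₀.sum) := by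
        rw [hssum, htsum] at hsum; linear_combination hsum
      have h3 : |((k':ℤ) - k) * n + (t₀.sum - s₀.sum)| ≤ (h:ℤ) * |n| + 2 * (h:ℤ) * M := by
        have hkb : |(k':ℤ) - k| ≤ (h:ℤ) := by
          have e1 : (0:ℤ) ≤ (k:ℤ) := Int.ofNat_nonneg k
          have e2 : (0:ℤ) ≤ (k':ℤ) := Int.ofNat_nonneg k'
          rw [abs_le]
          exact ⟨by linarith, by linarith⟩
        have b1 : |((k':ℤ) - k) * n| ≤ (h:ℤ) * |n| := by
          rw [abs_mul]
          exact mul_le_mul_of_nonneg_right hkb (abs_nonneg n)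
        have b2 : |t₀.sum - s₀.sum| ≤ |t₀.sum| + |s₀.sum| := abs_sub _ _
        calc |((k':ℤ) - k) * n + (t₀.sum - s₀.sum)|
            ≤ |((k':ℤ) - k) * n| + |t₀.sum - s₀.sum| := abs_add_le _ _
          _ ≤ (h:ℤ) * |n| + (|t₀.sum| + |s₀.sum|) := add_le_add b1 b2
          _ ≤ (h:ℤ) * |n| + 2 * (h:ℤ) * M := by linarith
      have h4 : (h:ℤ) * |n| + 2 * (h:ℤ) * M < x := by
        rw [hxdef, hKdef]; nlinarith [abs_nonneg n]
      have h5 : x ≤ |(((j:ℤ) - ((h:ℤ)-1) * k) - ((j':ℤ) - ((h:ℤ)-1) * k')) * x| := by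
        rw [abs_mul, abs_of_pos hx0]
        exact le_mul_of_one_le_left (le_of_lt hx0) h1
      rw [h2] at h5
      linarith
    -- now k = k' or contradiction via nocross
    have hrest : (k:ℤ) * n + s₀.sum = (k':ℤ) * n + t₀.sum := by
      rw [hssum, htsum, hcc] at hsum; linear_combination hsum
    rcases Nat.lt_trichotomy k k' with hlt | heq | hgt
    · exact absurd (nocross h hh F n hn j k j' k' s₀ t₀ hs0 (by omega)
        (by omega) hcc hrest hlt) (by simp)
    · have hjj : j = j' := by
        rw [heq] at hcc
        have : (j:ℤ) = j' := by linarith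
        exact_mod_cast this
      have hsum0 : s₀.sum = t₀.sum := by rw [heq] at hrest; linarith
      have : s₀ = t₀ := by
        apply hF s₀ t₀ (by omega) (by omega) hs0 ht0 hsum0
      rw [hsdec, htdec, hjj, heq, this]
    · exact absurd (nocross h hh F n hn j' k' j k t₀ s₀ ht0 (by omega)
        (by omega) hcc.symm hrest.symm hgt) (by simp)
  · -- representation of n
    refine ⟨replicate (h-1) x + {y}, ?_, ?_, ?_⟩
    · simp; omega
    · intro a ha
      rw [Multiset.mem_add] at ha
      rcases ha with ha | ha
      · rw [eq_of_mem_replicate ha]; simp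
      · rw [Multiset.mem_singleton] at ha; rw [ha]; simp
    · rw [sum_add, sum_replicate, sum_singleton, hydef]
      have : ((h - 1 : ℕ) : ℤ) = (h:ℤ) - 1 := by
        push_cast [Nat.cast_sub (by omega : 1 ≤ h)]; ring
      rw [nsmul_eq_mul, this]; ring

open Classical in
noncomputable def nextF (h : ℕ) (F : Finset ℤ) (n : ℤ) : Finset ℤ :=
  if c : 2 ≤ h ∧ GoodF h F ∧ ¬ ∃ s, IsRep (↑F) h n s then
    (step h c.1 F n c.2.1 c.2.2).choose
  else F

lemma nextF_subset (h : ℕ) (F : Finset ℤ) (n : ℤ) : F ⊆ nextF h F n := by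
  rw [nextF]
  split_ifs with c
  · exact (step h c.1 F n c.2.1 c.2.2).choose_spec.1
  · exact Finset.Subset.refl F

lemma nextF_good (h : ℕ) (hh : 2 ≤ h) (F : Finset ℤ) (n : ℤ) (hF : GoodF h F) :
    GoodF h (nextF h F n) := by
  rw [nextF]
  split_ifs with c
  · exact (step h c.1 F n c.2.1 c.2.2).choose_spec.2.1
  · exact hF

lemma nextF_rep (h : ℕ) (hh : 2 ≤ h) (F : Finset ℤ) (n : ℤ) (hF : GoodF h F) :
    ∃ s, IsRep (↑(nextF h F n)) h n s := by
  rw [nextF]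
  split_ifs with c
  · exact (step h c.1 F n c.2.1 c.2.2).choose_spec.2.2
  · push_neg at c
    exact c hh hF

noncomputable def seqF (h : ℕ) : ℕ → Finset ℤ
  | 0 => ∅
  | (t+1) => nextF h (seqF h t) ((Denumerable.eqv ℤ).symm t)

lemma goodF_empty (h : ℕ) : GoodF h (∅ : Finset ℤ) := by
  intro s t hsc htc hsmem htmem hsum
  have hs : s = 0 := Multiset.eq_zero_of_forall_notMem (fun a ha => by simpa using hsmem a ha)
  have ht : t = 0 := Multiset.eq_zero_of_forall_notMem (fun a ha => by simpa using htmem a ha)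
  rw [hs, ht]

lemma seqF_good (h : ℕ) (hh : 2 ≤ h) : ∀ t, GoodF h (seqF h t)
  | 0 => goodF_empty h
  | (t+1) => nextF_good h hh _ _ (seqF_good h hh t)

lemma seqF_mono (h : ℕ) {t t' : ℕ} (htt : t ≤ t') : seqF h t ⊆ seqF h t' := by
  induction t' with
  | zero => rw [Nat.le_zero.1 htt]
  | succ t' ih =>
    rcases Nat.lt_or_ge t (t'+1) with hlt | hge
    · exact (ih (by omega)).trans (nextF_subset h _ _)
    · rw [Nat.le_antisymm htt hge]

noncomputable def limA (h : ℕ) : Set ℤ := ⋃ t, (seqF h t : Set ℤ)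

lemma stage_of_multiset (h : ℕ) (s : Multiset ℤ) (hs : ∀ a ∈ s, a ∈ limA h) :
    ∃ T, ∀ a ∈ s, a ∈ seqF h T := by
  induction s using Multiset.induction_on with
  | empty => exact ⟨0, by simp⟩
  | cons a s ih =>
    obtain ⟨T1, hT1⟩ := ih (fun b hb => hs b (mem_cons_of_mem hb))
    have ha := hs a (mem_cons_self a s)
    obtain ⟨S, hS⟩ := Set.mem_iUnion.1 ha
    refine ⟨max T1 S, fun b hb => ?_⟩
    rcases mem_cons.1 hb with rfl | hb
    · exact seqF_mono h (le_max_right T1 S) hS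
    · exact seqF_mono h (le_max_left T1 S) (hT1 b hb)

theorem limA_spec (h : ℕ) (hh : 2 ≤ h) (n : ℤ) : ∃! s, IsRep (limA h) h n s := by
  -- existence
  set t : ℕ := Denumerable.eqv ℤ n with ht
  have hrep : ∃ s, IsRep (↑(seqF h (t+1))) h n s := by
    have := nextF_rep h hh (seqF h t) ((Denumerable.eqv ℤ).symm t) (seqF_good h hh t)
    rw [ht] at this ⊢
    simpa [seqF] using this
  obtain ⟨s, hcard, hmem, hsum⟩ := hrep
  refine ⟨s, ⟨hcard, fun a ha => Set.mem_iUnion.2 ⟨t+1, hmem a ha⟩, hsum⟩, ?_⟩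
  rintro s' ⟨hcard', hmem', hsum'⟩
  obtain ⟨T1, hT1⟩ := stage_of_multiset h s' hmem'
  have hT2 : ∀ a ∈ s, a ∈ seqF h (max T1 (t+1)) :=
    fun a ha => seqF_mono h (le_max_right _ _) (hmem a ha)
  have hT1' : ∀ a ∈ s', a ∈ seqF h (max T1 (t+1)) :=
    fun a ha => seqF_mono h (le_max_left _ _) (hT1 a ha)
  exact seqF_good h hh (max T1 (t+1)) s' s (by omega) (by omega) hT1' hT2
    (by rw [hsum, hsum'])

lemma rep_translate (A : Set ℤ) (h : ℕ) (k : ℤ)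
    (H : ∀ n, ∃! s, IsRep A h n s) (n : ℤ) :
    ∃! s, IsRep ((fun a => a + k) '' A) h n s := by
  obtain ⟨s₀, ⟨hc, hm, hs⟩, hu⟩ := H (n - h * k)
  have sum_map : ∀ (u : Multiset ℤ) (c : ℤ), (u.map (fun a => a + c)).sum
      = u.sum + (Multiset.card u : ℤ) * c := by
    intro u c
    induction u using Multiset.induction_on with
    | empty => simp
    | cons a u ih => simp [ih]; push_cast; ring
  refine ⟨s₀.map (fun a => a + k), ⟨by simp [hc], ?_, ?_⟩, ?_⟩
  · intro a ha
    obtain ⟨b, hb, rfl⟩ := Multiset.mem_map.1 ha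
    exact ⟨b, hm b hb, rfl⟩
  · rw [sum_map, hs, hc]; ring
  · rintro t ⟨htc, htm, hts⟩
    have key : t.map (fun a => a + (-k)) = s₀ := by
      apply hu
      refine ⟨by simp [htc], ?_, ?_⟩
      · intro a ha
        obtain ⟨b, hb, rfl⟩ := Multiset.mem_map.1 ha
        obtain ⟨c, hcA, hck⟩ := htm b hb
        simp only at hck
        rwa [show b + -k = c by omega]
      · rw [sum_map, hts, htc]; ring
    rw [← key, Multiset.map_map]
    simp

lemma aperiodic (A : Set ℤ) (h : ℕ) (hh : 2 ≤ h)
    (H : ∀ n, ∃! s, IsRep A h n s) (d : ℤ) (hd : (fun a => a + d) '' A = A) :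
    d = 0 := by
  by_contra hd0
  have hup : ∀ a ∈ A, a + d ∈ A := fun a ha => hd ▸ ⟨a, ha, rfl⟩
  have hdown : ∀ a ∈ A, a - d ∈ A := by
    intro a ha
    rw [← hd] at ha
    obtain ⟨b, hb, hba⟩ := ha
    simp only at hba
    rwa [show a - d = b by omega]
  have hstep_up : ∀ a ∈ A, a + |d| ∈ A := by
    intro a ha
    rcases abs_cases d with ⟨he, _⟩ | ⟨he, _⟩
    · rw [he]; exact hup a ha
    · rw [he]; simpa [sub_eq_add_neg] using hdown a ha
  have hstep_down : ∀ a ∈ A, a - |d| ∈ A := by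
    intro a ha
    rcases abs_cases d with ⟨he, _⟩ | ⟨he, _⟩
    · rw [he]; exact hdown a ha
    · rw [he]; simpa [sub_eq_add_neg] using hup a ha
  have hclose : ∀ (m : ℕ) (a : ℤ), a ∈ A → a - m * |d| ∈ A ∧ a + m * |d| ∈ A := by
    intro m
    induction m with
    | zero => intro a ha; constructor <;> simpa using ha
    | succ m ih =>
      intro a ha
      obtain ⟨h1, h2⟩ := ih a ha
      constructor
      · have := hstep_down _ h1
        convert this using 1
        push_cast; ring
      · have := hstep_up _ h2
        convert this using 1
        push_cast; ring
  -- get the unique representation of 0 and perturb it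
  obtain ⟨s, ⟨hc, hm, hs⟩, hu⟩ := H 0
  set l : List ℤ := s.sort (· ≤ ·) with hl
  have hlen : l.length = h := by rw [hl, Multiset.length_sort, hc]
  have hpos : 0 < l.length := by omega
  set a : ℤ := l.get ⟨0, hpos⟩ with hadef
  set b : ℤ := l.get ⟨l.length - 1, by omega⟩ with hbdef
  have hsorted : l.Pairwise (· ≤ ·) := Multiset.pairwise_sort s _
  have hbounds : ∀ c ∈ s, a ≤ c ∧ c ≤ b := by
    intro c hcs
    have hcl : c ∈ l := by rwa [hl, Multiset.mem_sort]
    obtain ⟨i, hi⟩ := List.mem_iff_get.1 hcl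
    constructor
    · rw [← hi, hadef]
      exact hsorted.rel_get_of_le (by simp [Fin.le_def])
    · rw [← hi, hbdef]
      exact hsorted.rel_get_of_le (by simp [Fin.le_def]; omega)
  have has : a ∈ s := by
    have : a ∈ l := l.get_mem _
    rwa [hl, Multiset.mem_sort] at this
  have hbs : b ∈ s := by
    have : b ∈ l := l.get_mem _
    rwa [hl, Multiset.mem_sort] at this
  set m : ℕ := (b - a).toNat + 1 with hm'
  have habs1 : (1:ℤ) ≤ |d| := Int.one_le_abs hd0
  have hmpos : (1:ℤ) ≤ (m:ℤ) := by
    have : 1 ≤ m := by omega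
    exact_mod_cast this
  set D : ℤ := (m:ℤ) * |d| with hD'
  have hD1 : 1 ≤ D := by nlinarith
  have hDba : b - a < D := by
    have h1 : b - a < (m:ℤ) := by
      rw [hm']
      push_cast
      have := Int.self_le_toNat (b - a)
      omega
    nlinarith
  have hbe : b ∈ s.erase a := by
    rcases eq_or_ne b a with heqba | hne
    · rw [← Multiset.count_pos, heqba, Multiset.count_erase_self]
      have hrep : s = Multiset.replicate (Multiset.card s) a := by
        rw [Multiset.eq_replicate_card]
        intro c hcs
        have := hbounds c hcs
        omega
      have hcount : Multiset.count a s = h := by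
        conv_lhs => rw [hrep]
        rw [Multiset.count_replicate_self, hc]
      omega
    · exact (Multiset.mem_erase_of_ne hne).2 hbs
  set s' : Multiset ℤ := (a - D) ::ₘ (b + D) ::ₘ ((s.erase a).erase b) with hs'
  have hcard' : Multiset.card s' = h := by
    rw [hs']
    simp [Multiset.card_erase_of_mem hbe, Multiset.card_erase_of_mem has, hc]
    omega
  have hsum' : s'.sum = 0 := by
    have e1 : b + ((s.erase a).erase b).sum = (s.erase a).sum := by
      have := congrArg Multiset.sum (Multiset.cons_erase hbe)
      simpa using this
    have e2 : a + (s.erase a).sum = s.sum := by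
      have := congrArg Multiset.sum (Multiset.cons_erase has)
      simpa using this
    rw [hs']
    simp only [Multiset.sum_cons]
    linarith [hs]
  have hmem' : ∀ c ∈ s', c ∈ A := by
    intro c hcs
    rw [hs'] at hcs
    rcases Multiset.mem_cons.1 hcs with rfl | hcs
    · rw [hD']; exact (hclose m a (hm a has)).1
    · rcases Multiset.mem_cons.1 hcs with rfl | hcs
      · rw [hD']; exact (hclose m b (hm b hbs)).2
      · exact hm c (Multiset.mem_of_mem_erase (Multiset.mem_of_mem_erase hcs))
  have heq : s' = s := hu s' ⟨hcard', hmem', hsum'⟩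
  have hmem'' : a - D ∈ s := by
    rw [← heq, hs']
    exact Multiset.mem_cons_self _ _
  have := (hbounds _ hmem'').1
  omega


theorem exists_unique_rep_basis (h : ℕ) (hh : 2 ≤ h) :
    {A : Set ℤ | ∀ n : ℤ, repFn A h n = 1}.Infinite := by
  set A₀ : Set ℤ := limA h with hA₀
  have Hrep : ∀ n, ∃! s, IsRep A₀ h n s := limA_spec h hh
  set f : ℤ → Set ℤ := fun k => (fun a => a + k) '' A₀ with hf
  refine Set.infinite_of_injective_forall_mem (f := f) ?_ ?_
  · intro k k' hkk
    have himg : (fun a => a + (k - k')) '' A₀ = A₀ := by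
      have h1 : (fun a => a + (-k')) '' (f k) = (fun a => a + (-k')) '' (f k') := by
        rw [hkk]
      rw [hf] at h1
      simp only [Set.image_image] at h1
      have e1 : (fun a => a + k + -k') = (fun a : ℤ => a + (k - k')) := by
        funext a; ring
      have e2 : (fun a => a + k' + -k') = (fun a : ℤ => a) := by
        funext a; ring
      rw [e1, e2] at h1
      simpa using h1
    have := aperiodic A₀ h hh Hrep (k - k') himg
    omega
  · intro k
    intro n
    exact bridge _ h n (rep_translate A₀ h k Hrep n)

theorem infinitely_many_unique_representation_bases (h : ℕ) (hh : 2 ≤ h) :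
    {A : Set ℤ | ∀ n : ℤ, repFn A h n = 1}.Infinite :=
  exists_unique_rep_basis h hh
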